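/- Let f : ℝ → ℝⁿ be continuous and non-constant. Then for every x ∈ ℝ there exists r_x > 0 such that for all 0 < r < r_x, one has 1/2 ≤ ℋ¹_∞(f(ℝ) ∩ B(f(x),r)) / (2r) ≤ 1. -/

import Mathlib

open ENNReal

/-- 1-dimensional Hausdorff content: infimum over countable covers of the
sum of diameters. -/
noncomputable def hContent {n : ℕ} (F : Set (EuclideanSpace ℝ (Fin n))) : ℝ≥0∞ :=
  ⨅ (U : ℕ → Set (EuclideanSpace ℝ (Fin n))) (_ : F ⊆ ⋃ i, U i),
    ∑' i, EMetric.diam (U i)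

theorem hContent_ball_ratio_bounds {n : ℕ}
    (f : ℝ → EuclideanSpace ℝ (Fin n)) (hf : Continuous f)
    (hnc : ∃ x y, f x ≠ f y) :
    ∀ x : ℝ, ∃ rx > 0, ∀ r : ℝ, 0 < r → r < rx →
      ENNReal.ofReal r ≤ hContent (Set.range f ∩ Metric.ball (f x) r) ∧
        hContent (Set.range f ∩ Metric.ball (f x) r) ≤ ENNReal.ofReal (2 * r) := by
  intro x
  obtain ⟨a, b, hab⟩ := hnc
  -- pick a point whose image differs from f x
  obtain ⟨t₀, ht₀⟩ : ∃ t₀, f t₀ ≠ f x := by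
    by_cases h : f a = f x
    · exact ⟨b, fun hb => hab (h.trans hb.symm)⟩
    · exact ⟨a, h⟩
  set rx : ℝ := dist (f t₀) (f x) with hrx
  have hrxpos : 0 < rx := dist_pos.2 ht₀
  refine ⟨rx, hrxpos, fun r hr hrlt => ?_⟩
  set S := Set.range f ∩ Metric.ball (f x) r with hS
  constructor
  · -- lower bound
    refine le_iInf₂ fun U hU => ?_
    -- the distance function image covers [0, r)
    have hcov : Set.Ico (0:ℝ) r ⊆ ⋃ i, (fun z => dist z (f x)) '' U i := by
      intro d hd
      have hmem : d ∈ Set.uIcc (dist (f x) (f x)) (dist (f t₀) (f x)) := by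
        rw [dist_self, Set.uIcc_of_le hrxpos.le]
        exact ⟨hd.1, le_of_lt (lt_of_lt_of_le hd.2 hrlt.le)⟩
      obtain ⟨t, _, ht⟩ := intermediate_value_uIcc
        (Continuous.continuousOn (by continuity :
          Continuous fun t : ℝ => dist (f t) (f x))) hmem
      have hftS : f t ∈ S := ⟨Set.mem_range_self t, by
        have ht' : dist (f t) (f x) = d := ht
        simp only [Metric.mem_ball]; rw [ht']; exact hd.2⟩
      obtain ⟨i, hi⟩ := Set.mem_iUnion.1 (hU hftS)
      exact Set.mem_iUnion.2 ⟨i, ⟨f t, hi, ht⟩⟩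
    calc ENNReal.ofReal r = MeasureTheory.volume (Set.Ico (0:ℝ) r) := by
            rw [Real.volume_Ico, sub_zero]
      _ ≤ MeasureTheory.volume (⋃ i, (fun z => dist z (f x)) '' U i) :=
            MeasureTheory.measure_mono hcov
      _ ≤ ∑' i, MeasureTheory.volume ((fun z => dist z (f x)) '' U i) :=
            MeasureTheory.measure_iUnion_le _
      _ ≤ ∑' i, EMetric.diam (U i) := by
            refine ENNReal.tsum_le_tsum fun i => ?_
            refine (Real.volume_le_diam _).trans ?_
            have := (LipschitzWith.dist_left (f x)).ediam_image_le (U i)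
            simp only [ENNReal.coe_one, one_mul] at this
            exact this
  · -- upper bound
    have hcov : S ⊆ ⋃ i, (fun i : ℕ => if i = 0 then Metric.ball (f x) r else ∅) i := by
      intro z hz
      exact Set.mem_iUnion.2 ⟨0, by simpa using hz.2⟩
    refine (iInf₂_le (fun i : ℕ => if i = 0 then Metric.ball (f x) r else ∅) hcov).trans ?_
    rw [tsum_eq_single 0 (by intro i hi; simp [hi]; exact Metric.ediam_empty)]
    simp only [if_pos rfl]
    calc EMetric.diam (Metric.ball (f x) r)
        = EMetric.diam (Metric.eball (f x) (ENNReal.ofReal r)) := by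
          rw [Metric.emetric_ball]
      _ ≤ 2 * ENNReal.ofReal r := EMetric.diam_ball
      _ = ENNReal.ofReal (2 * r) := by
          rw [ENNReal.ofReal_mul (by norm_num)]; norm_num
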